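/- arXiv:1405.2449 — 4 statements merged into one kernel-verified Lean document; each statement's English description precedes it below -/
import Mathlib

section
/- If f is a rational function P(x)/Q(x) with P, Q polynomials over the rationals, Q not identically zero, and f(n) is an integer for every sufficiently large natural number n, then f agrees with a polynomial function on all sufficiently large integers (i.e., there is a polynomial S with rational coefficients such that f(n) = S(n) for all sufficiently large n). -/
open Polynomial Filter

lemma exists_den_clear (S : Polynomial ℚ) :
    ∃ d : ℕ, 0 < d ∧ ∀ n : ℕ, ∃ z : ℤ, (d : ℚ) * S.eval (n : ℚ) = (z : ℚ) := by
  induction S using Polynomial.induction_on with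
  | C a =>
      refine ⟨a.den, a.pos, fun n => ⟨a.num, ?_⟩⟩
      simp [Rat.mul_den_eq_num, mul_comm]
  | add p q hp hq =>
      obtain ⟨dp, hdp, hp⟩ := hp
      obtain ⟨dq, hdq, hq⟩ := hq
      refine ⟨dp * dq, Nat.mul_pos hdp hdq, fun n => ?_⟩
      obtain ⟨zp, hzp⟩ := hp n
      obtain ⟨zq, hzq⟩ := hq n
      refine ⟨dq * zp + dp * zq, ?_⟩
      rw [eval_add]
      push_cast
      linear_combination (dq : ℚ) * hzp + (dp : ℚ) * hzq
  | monomial k a _ =>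
      refine ⟨a.den, a.pos, fun n => ⟨a.num * n ^ (k + 1), ?_⟩⟩
      rw [eval_mul, eval_C, eval_pow, eval_X]
      push_cast
      linear_combination ((n : ℚ) ^ (k + 1)) * Rat.mul_den_eq_num a

/-- If `f = P/Q` is a rational function over ℚ with `Q ≠ 0` and `f(n) ∈ ℤ`
for all sufficiently large naturals `n`, then `f` agrees with a polynomial for all
sufficiently large `n`. -/
theorem rational_integer_valued_is_polynomial (P Q : Polynomial ℚ) (hQ : Q ≠ 0)
    (h : ∃ N : ℕ, ∀ n : ℕ, N ≤ n →
      Q.eval (n : ℚ) ≠ 0 ∧ ∃ z : ℤ, P.eval (n : ℚ) / Q.eval (n : ℚ) = (z : ℚ)) :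
    ∃ (S : Polynomial ℚ) (M : ℕ), ∀ n : ℕ, M ≤ n →
      P.eval (n : ℚ) / Q.eval (n : ℚ) = S.eval (n : ℚ) := by
  obtain ⟨N, hN⟩ := h
  set c : ℚ := Q.leadingCoeff⁻¹ with hc
  have hc0 : c ≠ 0 := inv_ne_zero (leadingCoeff_ne_zero.mpr hQ)
  set Q1 : Polynomial ℚ := Q * C c with hQ1
  have hmonic : Q1.Monic := monic_mul_leadingCoeff_inv hQ
  set S : Polynomial ℚ := C c * (P /ₘ Q1) with hS
  set R : Polynomial ℚ := P %ₘ Q1 with hR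
  -- key identity
  have key : ∀ x : ℚ, Q.eval x ≠ 0 →
      P.eval x / Q.eval x = R.eval x / Q.eval x + S.eval x := by
    intro x hx
    have hPx : P.eval x = R.eval x + Q1.eval x * (P /ₘ Q1).eval x := by
      conv_lhs => rw [← modByMonic_add_div P Q1]
      simp [hR]
    rw [hPx, hQ1, hS]
    simp only [eval_mul, eval_C]
    field_simp
    ring
  -- degree bound
  have hdeg : R.degree < Q.degree := by
    have h1 : R.degree < Q1.degree := degree_modByMonic_lt P hmonic
    rwa [hQ1, degree_mul_C hc0] at h1
  -- denominator clearing
  obtain ⟨d, hd, hdS⟩ := exists_den_clear S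
  -- tendsto
  have htend : Tendsto (fun n : ℕ => R.eval (n : ℚ) / Q.eval (n : ℚ)) atTop (nhds 0) :=
    (Polynomial.div_tendsto_zero_of_degree_lt R Q hdeg).comp tendsto_natCast_atTop_atTop
  have hsmall : ∀ᶠ n : ℕ in atTop, |R.eval (n : ℚ) / Q.eval (n : ℚ)| < 1 / d := by
    have hε : (0 : ℚ) < 1 / d := by positivity
    filter_upwards [htend.eventually (eventually_abs_sub_lt 0 hε)] with n hn
    rwa [sub_zero] at hn
  obtain ⟨M₁, hM₁⟩ := eventually_atTop.mp hsmall
  -- R vanishes on large naturals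
  have hRzero : ∀ n : ℕ, max N M₁ ≤ n → R.eval (n : ℚ) = 0 := by
    intro n hn
    obtain ⟨hQn, z, hz⟩ := hN n (le_trans (le_max_left _ _) hn)
    obtain ⟨w, hw⟩ := hdS n
    have hsm := hM₁ n (le_trans (le_max_right _ _) hn)
    have hint : (d : ℚ) * (R.eval (n : ℚ) / Q.eval (n : ℚ)) = ((d * z - w : ℤ) : ℚ) := by
      have := key (n : ℚ) hQn
      have hRQ : R.eval (n : ℚ) / Q.eval (n : ℚ) = (z : ℚ) - S.eval (n : ℚ) := by
        rw [← hz, this]; ring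
      rw [hRQ]
      push_cast
      rw [mul_sub, hw]
    have habs : |((d * z - w : ℤ) : ℚ)| < 1 := by
      rw [← hint, abs_mul, abs_of_nonneg (by positivity : (0:ℚ) ≤ (d:ℚ))]
      calc (d : ℚ) * |R.eval (n : ℚ) / Q.eval (n : ℚ)| < (d : ℚ) * (1 / d) := by
            apply mul_lt_mul_of_pos_left hsm
            exact_mod_cast hd
        _ = 1 := by field_simp
    have : (d * z - w : ℤ) = 0 := by
      have h2 : |(d * z - w : ℤ)| < 1 := by
        rw [← Int.cast_abs (R := ℚ)] at habs
        exact_mod_cast habs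
      have := abs_lt.mp h2
      omega
    have h0 : (d : ℚ) * (R.eval (n : ℚ) / Q.eval (n : ℚ)) = 0 := by
      rw [hint, this]; norm_cast
    have hd' : (d : ℚ) ≠ 0 := by positivity
    have := mul_eq_zero.mp h0
    rcases this with h' | h'
    · exact absurd h' hd'
    · exact (div_eq_zero_iff.mp h').resolve_right hQn
  -- R = 0
  have hR0 : R = 0 := by
    apply Polynomial.eq_zero_of_infinite_isRoot
    apply Set.Infinite.mono (s := (fun n : ℕ => (n : ℚ)) '' Set.Ici (max N M₁))
    · rintro x ⟨n, hn, rfl⟩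
      exact hRzero n hn
    · exact Set.Infinite.image (fun a _ b _ hab => Nat.cast_injective hab) (Set.Ici_infinite _)
  refine ⟨S, N, fun n hn => ?_⟩
  obtain ⟨hQn, -⟩ := hN n hn
  rw [key (n : ℚ) hQn, hR0]
  simp
end

section
/- Let (A_n) be a strongly polynomial sequence of finite graphs with maximum degree uniformly bounded by D, and let d be the degree of the polynomial n ↦ |V(A_n)|. Then every connected graph occurring as an induced subgraph of some A_n already occurs as an induced subgraph of some A_m with m ≤ d+1; consequently the set of isomorphism types of connected components of the graphs A_n is finite. -/
open SimpleGraph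

/-- The number of graph homomorphisms from `F` to `A`. -/
noncomputable def homCount {α β : Type*} (F : SimpleGraph α) (A : SimpleGraph β) : ℕ :=
  Nat.card (F →g A)

/-- A sequence of finite graphs is strongly polynomial if every homomorphism count
from a fixed finite graph is a polynomial function of `n`. -/
def StronglyPolynomial {V : ℕ → Type} (A : ∀ n, SimpleGraph (V n)) : Prop :=
  ∀ (W : Type) [Fintype W] (F : SimpleGraph W),
    ∃ P : Polynomial ℚ, ∀ n : ℕ, (homCount F (A n) : ℚ) = P.eval (n : ℚ)

/-! ### Auxiliary material -/

open Function Polynomial Finset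

namespace BDC

/-- The number of injective graph homomorphisms. -/
noncomputable def monoCount {α β : Type*} (F : SimpleGraph α) (B : SimpleGraph β) : ℕ :=
  Nat.card {f : F →g B // Function.Injective ⇑f}

/-- The number of induced-subgraph embeddings. -/
noncomputable def embCount {α β : Type*} (F : SimpleGraph α) (B : SimpleGraph β) : ℕ :=
  Nat.card (F ↪g B)

instance finiteHom {α β : Type*} [Finite α] [Finite β] (F : SimpleGraph α)
    (B : SimpleGraph β) : Finite (F →g B) :=
  Finite.of_injective (fun f => (f : α → β)) DFunLike.coe_injective

instance finiteEmb {α β : Type*} [Finite α] [Finite β] (F : SimpleGraph α)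
    (B : SimpleGraph β) : Finite (F ↪g B) :=
  Finite.of_injective (fun f => (f : α → β)) DFunLike.coe_injective

instance finiteSetoid {α : Type*} [Finite α] : Finite (Setoid α) :=
  Finite.of_injective (fun s => (s.r : α → α → Prop))
    (fun s t h => Setoid.ext fun a b => by rw [show s.r = t.r from h])

open Classical in
/-- `Nat.card` of a subtype as a sum of indicators, with rational values. -/
lemma nat_card_subtype_sum {γ : Type*} [Fintype γ] (p : γ → Prop) :
    (Nat.card {x : γ // p x} : ℚ) = ∑ x : γ, if p x then (1 : ℚ) else 0 := by
  classical
  rw [Nat.card_eq_fintype_card, Fintype.card_subtype, ← Finset.sum_boole]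

lemma nat_card_sigma {ι : Type*} [Fintype ι] (T : ι → Type*) [∀ i, Finite (T i)] :
    Nat.card (Σ i, T i) = ∑ i, Nat.card (T i) := by
  letI : ∀ i, Fintype (T i) := fun i => Fintype.ofFinite _
  simp [Nat.card_eq_fintype_card]

/-- Quotient graph of `F` by a setoid `s`. -/
def quotGraph {W : Type*} (F : SimpleGraph W) (s : Setoid W) : SimpleGraph (Quotient s) where
  Adj x y := x ≠ y ∧ ∃ u v, Quotient.mk s u = x ∧ Quotient.mk s v = y ∧ F.Adj u v
  symm := by
    constructor
    rintro x y ⟨hne, u, v, hu, hv, h⟩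
    exact ⟨hne.symm, v, u, hv, hu, h.symm⟩
  loopless := by constructor; rintro x ⟨hne, _⟩; exact hne rfl

/-- A setoid is independent for `F` if related vertices are never adjacent. -/
def Indep {W : Type*} (F : SimpleGraph W) (s : Setoid W) : Prop :=
  ∀ u v, s u v → ¬ F.Adj u v

lemma monoCount_congr {α α' β : Type*} {F : SimpleGraph α} {F' : SimpleGraph α'}
    (e : F ≃g F') (B : SimpleGraph β) : monoCount F B = monoCount F' B := by
  apply Nat.card_congr
  refine ⟨fun f => ⟨f.1.comp e.symm.toHom, f.2.comp e.symm.toEquiv.injective⟩,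
      fun g => ⟨g.1.comp e.toHom, g.2.comp e.toEquiv.injective⟩, ?_, ?_⟩ <;>
    · rintro ⟨f, hf⟩
      refine Subtype.ext (DFunLike.ext _ _ fun x => ?_)
      simp

open Classical in
/-- The fiber of the kernel map over a single setoid. -/
lemma card_ker_fiber {W β : Type*} [Finite W] [Finite β] (F : SimpleGraph W)
    (B : SimpleGraph β) (s : Setoid W) :
    Nat.card {f : F →g B // Setoid.ker ⇑f = s}
      = if Indep F s then monoCount (quotGraph F s) B else 0 := by
  split_ifs with hs
  · apply Nat.card_congr
    refine
      { toFun := fun f =>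
          ⟨⟨Quotient.lift ⇑f.1 (fun a b hab => by
              have h' : Setoid.ker ⇑f.1 a b := by rw [f.2]; exact hab
              exact h'), ?_⟩, ?_⟩
        invFun := fun g =>
          ⟨⟨fun w => g.1 (Quotient.mk s w), fun {u v} huv =>
            g.1.map_rel ⟨fun h => (hs u v (Quotient.exact h) huv), u, v, rfl, rfl, huv⟩⟩, ?_⟩
        left_inv := ?_
        right_inv := ?_ }
    · rintro x y ⟨hne, u, v, hu, hv, huv⟩
      subst hu; subst hv
      exact f.1.map_rel huv
    · intro x y
      refine Quotient.inductionOn₂ x y fun u v h => ?_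
      have h'' : s u v := by rw [← f.2]; exact h
      exact Quotient.sound h''
    · refine Setoid.ext fun u v => ?_
      constructor
      · intro h
        exact Quotient.exact (g.2 h)
      · intro h
        show g.1 _ = g.1 _
        rw [Quotient.sound h]
    · rintro ⟨f, hf⟩
      exact Subtype.ext (DFunLike.ext _ _ fun w => rfl)
    · rintro ⟨g, hg⟩
      refine Subtype.ext (DFunLike.ext _ _ fun x => ?_)
      exact Quotient.inductionOn x fun w => rfl
  · rw [Nat.card_eq_zero]
    left
    constructor
    rintro ⟨f, hf⟩
    simp only [Indep, not_forall, not_not] at hs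
    obtain ⟨u, v, hsuv, hadj⟩ := hs
    have h1 : ⇑f u = ⇑f v := by
      have h' : Setoid.ker ⇑f u v := by rw [hf]; exact hsuv
      exact h'
    exact B.loopless.irrefl _ (h1 ▸ f.map_rel hadj)

/-- The trivial setoid (kernel of the identity). -/
def trivSetoid (W : Type*) : Setoid W := Setoid.ker (id : W → W)

lemma trivSetoid_iff {W : Type*} {u v : W} : trivSetoid W u v ↔ u = v := Iff.rfl

lemma indep_trivSetoid {W : Type*} (F : SimpleGraph W) : Indep F (trivSetoid W) := by
  intro u v h hadj
  have h' : u = v := h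
  subst h'
  exact F.loopless.irrefl _ hadj

/-- The quotient by the trivial setoid is isomorphic to the original graph. -/
def quotTrivIso {W : Type*} (F : SimpleGraph W) : quotGraph F (trivSetoid W) ≃g F where
  toFun := Quotient.lift id (fun a b h => h)
  invFun := Quotient.mk (trivSetoid W)
  left_inv := fun x => Quotient.inductionOn x fun w => rfl
  right_inv := fun w => rfl
  map_rel_iff' := by
    rintro x y
    refine Quotient.inductionOn₂ x y fun u v => ?_
    show F.Adj u v ↔ _
    constructor
    · intro h
      refine ⟨fun heq => ?_, u, v, rfl, rfl, h⟩
      have h' : u = v := Quotient.exact heq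
      exact F.loopless.irrefl _ (h' ▸ h)
    · rintro ⟨hne, u', v', hu, hv, h⟩
      have h1 : u' = u := Quotient.exact hu
      have h2 : v' = v := Quotient.exact hv
      exact h1 ▸ h2 ▸ h

lemma card_quot_lt {W : Type*} [Fintype W] (s : Setoid W) [Fintype (Quotient s)]
    (hs : s ≠ trivSetoid W) : Fintype.card (Quotient s) < Fintype.card W := by
  have hns : ¬ Function.Injective (Quotient.mk s) := by
    intro hinj
    apply hs
    refine Setoid.ext fun a b => ?_
    constructor
    · intro h
      exact hinj (Quotient.sound h)
    · intro h
      have h' : a = b := h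
      exact h' ▸ Setoid.refl a
  exact Fintype.card_lt_of_surjective_not_injective _ Quotient.mk_surjective hns

open Classical in
/-- Key identity: homomorphisms are partitioned by their kernels. -/
lemma homCount_eq_sum {W β : Type*} [Fintype W] [Finite β] (F : SimpleGraph W)
    (B : SimpleGraph β) :
    haveI : Fintype (Setoid W) := Fintype.ofFinite _
    homCount F B = monoCount F B +
      ∑ s ∈ Finset.univ.erase (trivSetoid W),
        (if Indep F s then monoCount (quotGraph F s) B else 0) := by
  classical
  letI : Fintype (Setoid W) := Fintype.ofFinite _
  have h1 : homCount F B = ∑ s : Setoid W, Nat.card {f : F →g B // Setoid.ker ⇑f = s} := by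
    rw [homCount, ← nat_card_sigma]
    exact Nat.card_congr (Equiv.sigmaFiberEquiv fun f : F →g B => Setoid.ker ⇑f).symm
  rw [h1, ← Finset.add_sum_erase (a := trivSetoid W) _ _ (Finset.mem_univ _)]
  congr 1
  · rw [card_ker_fiber, if_pos (indep_trivSetoid F), monoCount_congr (quotTrivIso F) B]
  · exact Finset.sum_congr rfl fun s _ => card_ker_fiber F B s

/-- Sum of polynomial sequences is polynomial. -/
lemma polyseq_sum {ι : Type*} (s : Finset ι) (g : ι → ℕ → ℚ)
    (h : ∀ i ∈ s, ∃ Q : Polynomial ℚ, ∀ n : ℕ, g i n = Q.eval (n : ℚ)) :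
    ∃ Q : Polynomial ℚ, ∀ n : ℕ, (∑ i ∈ s, g i n) = Q.eval (n : ℚ) := by
  classical
  induction s using Finset.induction with
  | empty => exact ⟨0, by simp⟩
  | @insert a s' hnot ih =>
    obtain ⟨Q1, hQ1⟩ := h a (Finset.mem_insert_self a s')
    obtain ⟨Q2, hQ2⟩ := ih fun i hi => h i (Finset.mem_insert_of_mem hi)
    exact ⟨Q1 + Q2, fun n => by
      rw [Finset.sum_insert hnot, hQ1, hQ2, eval_add]⟩

section Sequence

variable {V : ℕ → Type} [∀ n, Fintype (V n)] (A : ∀ n, SimpleGraph (V n))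

/-- Injective homomorphism counts into a strongly polynomial sequence are polynomial. -/
lemma mono_poly (hsp : StronglyPolynomial A) :
    ∀ (k : ℕ) (W : Type) [Fintype W], Fintype.card W ≤ k → ∀ (F : SimpleGraph W),
      ∃ Q : Polynomial ℚ, ∀ n : ℕ, (monoCount F (A n) : ℚ) = Q.eval (n : ℚ) := by
  intro k
  induction k using Nat.strong_induction_on with
  | _ k IH =>
    intro W _W hcard F
    classical
    letI : Fintype (Setoid W) := Fintype.ofFinite _
    obtain ⟨Ph, hPh⟩ := hsp W F
    have hterm : ∀ s ∈ Finset.univ.erase (trivSetoid W),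
        ∃ Q : Polynomial ℚ, ∀ n : ℕ,
          ((if Indep F s then monoCount (quotGraph F s) (A n) else 0 : ℕ) : ℚ)
            = Q.eval (n : ℚ) := by
      intro s hserase
      by_cases hind : Indep F s
      · haveI : Fintype (Quotient s) := Fintype.ofFinite _
        have hlt : Fintype.card (Quotient s) < k :=
          lt_of_lt_of_le (card_quot_lt s (Finset.ne_of_mem_erase hserase)) hcard
        obtain ⟨Q, hQ⟩ := IH (Fintype.card (Quotient s)) hlt (Quotient s) le_rfl
          (quotGraph F s)
        exact ⟨Q, fun n => by rw [if_pos hind]; exact hQ n⟩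
      · exact ⟨0, fun n => by rw [if_neg hind]; simp⟩
    obtain ⟨Qs, hQs⟩ := polyseq_sum (Finset.univ.erase (trivSetoid W))
      (fun s n => ((if Indep F s then monoCount (quotGraph F s) (A n) else 0 : ℕ) : ℚ)) hterm
    refine ⟨Ph - Qs, fun n => ?_⟩
    have h := homCount_eq_sum F (A n)
    have h' : (homCount F (A n) : ℚ) = (monoCount F (A n) : ℚ) +
        ∑ s ∈ Finset.univ.erase (trivSetoid W),
          ((if Indep F s then monoCount (quotGraph F s) (A n) else 0 : ℕ) : ℚ) := by
      rw [h]
      push_cast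
      rfl
    rw [eval_sub, ← hPh n, ← hQs n, h']
    ring

end Sequence

/-! ### Inclusion–exclusion: embeddings from injective homomorphisms -/

section InclExcl

variable {W β : Type*} [Fintype W] [Fintype β] (F : SimpleGraph W) (B : SimpleGraph β)

open Classical in
/-- The non-edges of `F`. -/
noncomputable def nonEdges (F : SimpleGraph W) : Finset (Sym2 W) :=
  Finset.univ.filter (fun e => ¬ e.IsDiag ∧ e ∉ F.edgeSet)

open Classical in
/-- The set of non-edges of `F` that a map `f` sends to edges of `B`. -/
noncomputable def badSet (f : F →g B) : Finset (Sym2 W) :=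
  (nonEdges F).filter (fun e => e.map ⇑f ∈ B.edgeSet)

lemma badSet_subset (f : F →g B) : badSet F B f ⊆ nonEdges F := by
  intro e he
  simp only [badSet, Finset.mem_filter] at he
  exact he.1

lemma emb_equiv_badSet_empty :
    Nonempty ((F ↪g B) ≃ {f : {f : F →g B // Function.Injective ⇑f} // badSet F B f.1 = ∅}) := by
  classical
  refine ⟨{ toFun := fun f => ⟨⟨f.toHom, f.injective⟩, ?_⟩
            invFun := fun f => ?_
            left_inv := ?_
            right_inv := ?_ }⟩
  · rw [Finset.eq_empty_iff_forall_notMem]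
    intro e he
    rw [badSet, Finset.mem_filter, nonEdges, Finset.mem_filter] at he
    obtain ⟨⟨-, hnd, hne⟩, hmap⟩ := he
    induction e using Sym2.ind with
    | _ u v =>
      rw [Sym2.map_pair_eq, SimpleGraph.mem_edgeSet] at hmap
      rw [SimpleGraph.mem_edgeSet] at hne
      exact hne (f.map_adj_iff.mp hmap)
  · refine ⟨⟨⇑f.1.1, f.1.2⟩, ?_⟩
    intro u v
    constructor
    · intro hadj
      by_contra hne
      have huv : u ≠ v := fun h => by subst h; exact B.loopless.irrefl _ hadj
      have hmem : s(u, v) ∈ badSet F B f.1.1 := by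
        rw [badSet, Finset.mem_filter, nonEdges, Finset.mem_filter]
        refine ⟨⟨Finset.mem_univ _, ?_, ?_⟩, ?_⟩
        · rwa [Sym2.isDiag_iff_proj_eq]
        · rwa [SimpleGraph.mem_edgeSet]
        · rw [Sym2.map_pair_eq, SimpleGraph.mem_edgeSet]
          exact hadj
      rw [f.2] at hmem
      exact Finset.notMem_empty _ hmem
    · exact fun h => f.1.1.map_rel h
  · intro f
    rfl
  · intro f
    exact Subtype.ext (Subtype.ext (DFunLike.ext _ _ fun w => rfl))

lemma mono_equiv_subset_badSet (S : Finset (Sym2 W)) (hS : S ⊆ nonEdges F) :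
    Nonempty ({f : {f : F →g B // Function.Injective ⇑f} // S ⊆ badSet F B f.1}
      ≃ {g : (F ⊔ SimpleGraph.fromEdgeSet ↑S) →g B // Function.Injective ⇑g}) := by
  classical
  refine ⟨{ toFun := fun f => ⟨⟨⇑f.1.1, ?_⟩, f.1.2⟩
            invFun := fun g => ⟨⟨⟨⇑g.1, fun h => g.1.map_rel (Or.inl h)⟩, g.2⟩, ?_⟩
            left_inv := fun f => Subtype.ext (Subtype.ext (DFunLike.ext _ _ fun w => rfl))
            right_inv := fun g => Subtype.ext (DFunLike.ext _ _ fun w => rfl) }⟩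
  · intro u v h
    rcases h with h | h
    · exact f.1.1.map_rel h
    · rw [SimpleGraph.fromEdgeSet_adj] at h
      obtain ⟨hmem, hne⟩ := h
      have hb : s(u, v) ∈ badSet F B f.1.1 := f.2 (by exact_mod_cast hmem)
      rw [badSet, Finset.mem_filter] at hb
      have hb2 := hb.2
      rwa [Sym2.map_pair_eq, SimpleGraph.mem_edgeSet] at hb2
  · intro e he
    have heNE : e ∈ nonEdges F := hS he
    rw [badSet, Finset.mem_filter]
    refine ⟨heNE, ?_⟩
    induction e using Sym2.ind with
    | _ u v =>
      rw [nonEdges, Finset.mem_filter] at heNE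
      obtain ⟨-, hnd, -⟩ := heNE
      rw [Sym2.isDiag_iff_proj_eq] at hnd
      have hadj : (F ⊔ SimpleGraph.fromEdgeSet ↑S).Adj u v := by
        refine Or.inr ?_
        rw [SimpleGraph.fromEdgeSet_adj]
        exact ⟨by exact_mod_cast he, hnd⟩
      rw [Sym2.map_pair_eq, SimpleGraph.mem_edgeSet]
      exact g.1.map_rel hadj

open Classical in
/-- Inclusion–exclusion: the embedding count in terms of injective homomorphism counts. -/
lemma embCount_eq_sum :
    (embCount F B : ℚ) = ∑ S ∈ (nonEdges F).powerset,
      (-1 : ℚ) ^ S.card * (monoCount (F ⊔ SimpleGraph.fromEdgeSet ↑S) B : ℚ) := by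
  classical
  letI : Fintype {f : F →g B // Function.Injective ⇑f} := Fintype.ofFinite _
  have step1 : (embCount F B : ℚ)
      = ∑ f : {f : F →g B // Function.Injective ⇑f},
          if badSet F B f.1 = ∅ then (1 : ℚ) else 0 := by
    rw [embCount, Nat.card_congr (emb_equiv_badSet_empty F B).some, nat_card_subtype_sum]
    exact Finset.sum_congr rfl fun x _ => by convert rfl
  have step2 : ∀ S ∈ (nonEdges F).powerset,
      (monoCount (F ⊔ SimpleGraph.fromEdgeSet ↑S) B : ℚ)
        = ∑ f : {f : F →g B // Function.Injective ⇑f},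
            if S ⊆ badSet F B f.1 then (1 : ℚ) else 0 := by
    intro S hS
    rw [Finset.mem_powerset] at hS
    rw [monoCount, Nat.card_congr (mono_equiv_subset_badSet F B S hS).some.symm,
      nat_card_subtype_sum]
    exact Finset.sum_congr rfl fun x _ => by convert rfl
  calc (embCount F B : ℚ)
      = ∑ f : {f : F →g B // Function.Injective ⇑f},
          if badSet F B f.1 = ∅ then (1 : ℚ) else 0 := step1
    _ = ∑ f : {f : F →g B // Function.Injective ⇑f}, ∑ S ∈ (nonEdges F).powerset,
          (-1 : ℚ) ^ S.card * (if S ⊆ badSet F B f.1 then (1 : ℚ) else 0) := by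
        refine Finset.sum_congr rfl fun f _ => ?_
        have hsub : badSet F B f.1 ⊆ nonEdges F := badSet_subset F B f.1
        have e1 : (nonEdges F).powerset.filter (fun S => S ⊆ badSet F B f.1)
            = (badSet F B f.1).powerset := by
          ext S
          simp only [Finset.mem_filter, Finset.mem_powerset]
          exact ⟨fun h => h.2, fun h => ⟨h.trans hsub, h⟩⟩
        have e2 : ∑ S ∈ (nonEdges F).powerset,
            (-1 : ℚ) ^ S.card * (if S ⊆ badSet F B f.1 then (1 : ℚ) else 0)
            = ∑ S ∈ (badSet F B f.1).powerset, (-1 : ℚ) ^ S.card := by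
          rw [← e1, Finset.sum_filter]
          refine Finset.sum_congr rfl fun S _ => ?_
          split_ifs <;> ring
        rw [e2]
        have e3 := Finset.sum_powerset_neg_one_pow_card (x := badSet F B f.1)
        have e4 : ((∑ S ∈ (badSet F B f.1).powerset, (-1 : ℤ) ^ S.card : ℤ) : ℚ)
            = ∑ S ∈ (badSet F B f.1).powerset, (-1 : ℚ) ^ S.card := by
          push_cast
          rfl
        rw [← e4, e3]
        split_ifs <;> simp
    _ = ∑ S ∈ (nonEdges F).powerset, ∑ f : {f : F →g B // Function.Injective ⇑f},
          (-1 : ℚ) ^ S.card * (if S ⊆ badSet F B f.1 then (1 : ℚ) else 0) :=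
        Finset.sum_comm
    _ = ∑ S ∈ (nonEdges F).powerset,
          (-1 : ℚ) ^ S.card * (monoCount (F ⊔ SimpleGraph.fromEdgeSet ↑S) B : ℚ) := by
        refine Finset.sum_congr rfl fun S hS => ?_
        rw [step2 S hS, Finset.mul_sum]

end InclExcl

/-! ### Embedding counts are polynomial -/

section Sequence2

variable {V : ℕ → Type} [∀ n, Fintype (V n)] (A : ∀ n, SimpleGraph (V n))

lemma emb_poly (hsp : StronglyPolynomial A) (W : Type) [Fintype W] (F : SimpleGraph W) :
    ∃ Q : Polynomial ℚ, ∀ n : ℕ, (embCount F (A n) : ℚ) = Q.eval (n : ℚ) := by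
  classical
  have hterm : ∀ S ∈ (nonEdges F).powerset,
      ∃ Q : Polynomial ℚ, ∀ n : ℕ,
        ((-1 : ℚ) ^ S.card * (monoCount (F ⊔ SimpleGraph.fromEdgeSet ↑S) (A n) : ℚ))
          = Q.eval (n : ℚ) := by
    intro S _
    obtain ⟨Q, hQ⟩ := mono_poly A hsp (Fintype.card W) W le_rfl
      (F ⊔ SimpleGraph.fromEdgeSet ↑S)
    exact ⟨C ((-1 : ℚ) ^ S.card) * Q, fun n => by rw [eval_mul, eval_C, hQ n]⟩
  obtain ⟨Q, hQ⟩ := polyseq_sum ((nonEdges F).powerset) _ hterm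
  exact ⟨Q, fun n => by rw [embCount_eq_sum, hQ n]⟩

end Sequence2

/-! ### Degree bound via an injective encoding -/

lemma embCount_le_of_connected {W β : Type*} [Fintype W] [Fintype β]
    (F : SimpleGraph W) (B : SimpleGraph β) (D : ℕ)
    (hD : ∀ v, Nat.card (B.neighborSet v) ≤ D) (hF : F.Connected) :
    embCount F B ≤ Fintype.card β * (D + 1) ^ Fintype.card W := by
  classical
  haveI : Nonempty W := hF.nonempty
  set w₀ := Classical.arbitrary W with hw₀
  have hpred : ∀ w : W, w ≠ w₀ → ∃ u, F.Adj u w ∧ F.dist w₀ u < F.dist w₀ w := by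
    intro w hw
    obtain ⟨p, hp⟩ := hF.exists_walk_length_eq_dist w w₀
    cases p with
    | nil => exact absurd rfl hw
    | @cons _ u _ h q =>
      refine ⟨u, h.symm, ?_⟩
      have h1 : F.dist w₀ u ≤ q.length := by
        rw [SimpleGraph.dist_comm]; exact SimpleGraph.dist_le q
      have h2 : F.dist w₀ w = q.length + 1 := by
        rw [SimpleGraph.dist_comm, ← hp]
        simp [SimpleGraph.Walk.length_cons]
      omega
  have hemb : ∀ v : β, Nonempty (B.neighborSet v ↪ Fin (D + 1)) := by
    intro v
    haveI : Fintype (B.neighborSet v) := Fintype.ofFinite _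
    apply Function.Embedding.nonempty_of_card_le
    rw [Fintype.card_fin]
    calc Fintype.card (B.neighborSet v) = Nat.card (B.neighborSet v) :=
          (Nat.card_eq_fintype_card).symm
      _ ≤ D := hD v
      _ ≤ D + 1 := Nat.le_succ D
  let idx : β → β → Fin (D + 1) := fun v x =>
    if h : x ∈ B.neighborSet v then (hemb v).some ⟨x, h⟩ else ⟨0, Nat.succ_pos D⟩
  have idx_inj : ∀ v x y, x ∈ B.neighborSet v → y ∈ B.neighborSet v →
      idx v x = idx v y → x = y := by
    intro v x y hx hy h
    simp only [idx, dif_pos hx, dif_pos hy] at h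
    have h2 := (hemb v).some.injective h
    exact congrArg Subtype.val h2
  let Φ : (F ↪g B) → β × (W → Fin (D + 1)) := fun f =>
    (f w₀, fun w => if h : w = w₀ then ⟨0, Nat.succ_pos D⟩
      else idx (f (hpred w h).choose) (f w))
  have hΦ : Function.Injective Φ := by
    intro f g hfg
    have h0 : f w₀ = g w₀ := congrArg Prod.fst hfg
    have hsnd := congrArg Prod.snd hfg
    have key : ∀ k, ∀ w : W, F.dist w₀ w ≤ k → f w = g w := by
      intro k
      induction k with
      | zero =>
        intro w hw
        have hw0 : w₀ = w := (hF.dist_eq_zero_iff).mp (Nat.le_zero.mp hw)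
        rw [← hw0]
        exact h0
      | succ k ihk =>
        intro w hw
        by_cases hww : w = w₀
        · rw [hww]; exact h0
        · obtain ⟨hadj, hdlt⟩ := (hpred w hww).choose_spec
          set u := (hpred w hww).choose with hu
          have hfu : f u = g u := ihk u (by omega)
          have hw' := congrFun hsnd w
          simp only [Φ, dif_neg hww] at hw'
          rw [hfu] at hw'
          have hmf : (f w) ∈ B.neighborSet (g u) := by
            rw [← hfu]
            exact f.toHom.map_adj hadj
          have hmg : (g w) ∈ B.neighborSet (g u) := g.toHom.map_adj hadj
          exact idx_inj _ _ _ hmf hmg hw'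
    exact DFunLike.ext f g fun w => key (F.dist w₀ w) w le_rfl
  calc embCount F B ≤ Nat.card (β × (W → Fin (D + 1))) :=
        Nat.card_le_card_of_injective Φ hΦ
    _ = Fintype.card β * (D + 1) ^ Fintype.card W := by
        rw [Nat.card_eq_fintype_card, Fintype.card_prod, Fintype.card_fun, Fintype.card_fin]

/-! ### Polynomial degree comparison -/

lemma natDegree_le_of_bound (P Q : Polynomial ℚ) (g : ℕ → ℕ) (Cb : ℚ) (hC : 0 < Cb)
    (hg : ∀ n : ℕ, (g n : ℚ) = Q.eval (n : ℚ)) (hQ0 : Q ≠ 0)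
    (hb : ∀ n : ℕ, (g n : ℚ) ≤ Cb * P.eval (n : ℚ)) : Q.natDegree ≤ P.natDegree := by
  by_contra hlt
  push_neg at hlt
  set φ := algebraMap ℚ ℝ with hφ
  have heval : ∀ (R : Polynomial ℚ) (n : ℕ), (R.map φ).eval ((n : ℝ)) = ((R.eval (n : ℚ) : ℚ) : ℝ) := by
    intro R n
    have h1 : ((n : ℝ)) = φ ((n : ℚ)) := by simp [hφ]
    rw [h1, Polynomial.eval_map, Polynomial.eval₂_at_apply]
    exact congrArg _ rfl |>.trans (eq_ratCast φ _)
  have hQ' : Q.map φ ≠ 0 := Polynomial.map_ne_zero hQ0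
  have hdeg : (P.map φ).degree < (Q.map φ).degree := by
    rw [Polynomial.degree_map_eq_of_injective (algebraMap ℚ ℝ).injective,
        Polynomial.degree_map_eq_of_injective (algebraMap ℚ ℝ).injective]
    exact Polynomial.degree_lt_degree hlt
  have ht : Filter.Tendsto (fun x : ℝ => (P.map φ).eval x / (Q.map φ).eval x)
      Filter.atTop (nhds 0) := Polynomial.div_tendsto_zero_of_degree_lt _ _ hdeg
  have ht2 : Filter.Tendsto (fun n : ℕ => (P.map φ).eval ((n : ℝ)) / (Q.map φ).eval ((n : ℝ)))
      Filter.atTop (nhds 0) := ht.comp tendsto_natCast_atTop_atTop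
  have hroots : {n : ℕ | Q.eval ((n : ℚ)) = 0}.Finite := by
    apply Set.Finite.preimage (f := fun n : ℕ => (n : ℚ))
      (Function.Injective.injOn Nat.cast_injective)
      (Polynomial.finite_setOf_isRoot hQ0)
  have hev : ∀ᶠ n : ℕ in Filter.atTop, Q.eval ((n : ℚ)) ≠ 0 := by
    have h2 : {n : ℕ | Q.eval ((n : ℚ)) = 0}ᶜ ∈ Filter.cofinite := hroots.compl_mem_cofinite
    rw [Nat.cofinite_eq_atTop] at h2
    exact h2
  have hlb : ∀ᶠ n : ℕ in Filter.atTop,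
      ((Cb⁻¹ : ℚ) : ℝ) ≤ (P.map φ).eval ((n : ℝ)) / (Q.map φ).eval ((n : ℝ)) := by
    filter_upwards [hev] with n hn
    have h1 : (1 : ℚ) ≤ (g n : ℚ) := by
      have h2 : (g n : ℚ) ≠ 0 := by rw [hg n]; exact hn
      have h3 : g n ≠ 0 := by exact_mod_cast h2
      exact_mod_cast Nat.one_le_iff_ne_zero.mpr h3
    have hQn : (1 : ℚ) ≤ Q.eval ((n : ℚ)) := by rw [← hg n]; exact h1
    have hPn : Q.eval ((n : ℚ)) ≤ Cb * P.eval ((n : ℚ)) := by rw [← hg n]; exact hb n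
    have hQpos : (0 : ℚ) < Q.eval ((n : ℚ)) := by linarith
    have hineq : Cb⁻¹ ≤ P.eval ((n : ℚ)) / Q.eval ((n : ℚ)) := by
      rw [le_div_iff₀ hQpos]
      have h4 : Cb⁻¹ * Q.eval ((n : ℚ)) ≤ Cb⁻¹ * (Cb * P.eval ((n : ℚ))) :=
        mul_le_mul_of_nonneg_left hPn (le_of_lt (inv_pos.mpr hC))
      calc Cb⁻¹ * Q.eval ((n : ℚ)) ≤ Cb⁻¹ * (Cb * P.eval ((n : ℚ))) := h4
        _ = P.eval ((n : ℚ)) := by field_simp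
    have hcast : ((P.eval ((n : ℚ)) / Q.eval ((n : ℚ)) : ℚ) : ℝ)
        = (P.map φ).eval ((n : ℝ)) / (Q.map φ).eval ((n : ℝ)) := by
      rw [heval P n, heval Q n, Rat.cast_div]
    rw [← hcast]
    exact_mod_cast hineq
  have hfin : ((Cb⁻¹ : ℚ) : ℝ) ≤ 0 := ge_of_tendsto ht2 hlb
  have hfin2 : (Cb⁻¹ : ℚ) ≤ 0 := by exact_mod_cast hfin
  have : (0 : ℚ) < Cb⁻¹ := inv_pos.mpr hC
  linarith

/-! ### A nonzero polynomial of low degree is nonzero at a small natural -/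

lemma exists_eval_ne {Q : Polynomial ℚ} (hQ0 : Q ≠ 0) (d : ℕ) (hd : Q.natDegree ≤ d) :
    ∃ m : ℕ, m ≤ d ∧ Q.eval ((m : ℚ)) ≠ 0 := by
  by_contra h
  push_neg at h
  have hsub : (Finset.range (d + 1)).image (fun m : ℕ => (m : ℚ)) ⊆ Q.roots.toFinset := by
    intro x hx
    simp only [Finset.mem_image, Finset.mem_range] at hx
    obtain ⟨m, hm, rfl⟩ := hx
    rw [Multiset.mem_toFinset, Polynomial.mem_roots']
    exact ⟨hQ0, h m (by omega)⟩
  have h1 : d + 1 ≤ Q.roots.toFinset.card := by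
    calc d + 1 = ((Finset.range (d + 1)).image (fun m : ℕ => (m : ℚ))).card := by
          rw [Finset.card_image_of_injective _ Nat.cast_injective, Finset.card_range]
      _ ≤ _ := Finset.card_le_card hsub
  have h2 : Q.roots.toFinset.card ≤ Multiset.card Q.roots := Multiset.toFinset_card_le _
  have h3 : Multiset.card Q.roots ≤ Q.natDegree := Polynomial.card_roots' Q
  omega

/-! ### Connectivity of components -/

lemma reachable_induce_of_walk {γ : Type*} {G : SimpleGraph γ} {s : Set γ} :
    ∀ {a b : γ} (p : G.Walk a b), (∀ x ∈ p.support, x ∈ s) →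
      ∀ (ha : a ∈ s) (hb : b ∈ s), (G.induce s).Reachable ⟨a, ha⟩ ⟨b, hb⟩ := by
  intro a b p
  induction p with
  | nil => intro _ ha hb; exact Reachable.refl _
  | @cons a x b h q ih =>
    intro hsup ha hb
    have hx : x ∈ s := hsup x (by simp [SimpleGraph.Walk.support_cons])
    have hadj : (G.induce s).Adj ⟨a, ha⟩ ⟨x, hx⟩ := h
    exact (hadj.reachable).trans
      (ih (fun y hy => hsup y (by simp [SimpleGraph.Walk.support_cons, hy])) hx hb)

lemma induce_supp_connected {γ : Type*} (G : SimpleGraph γ) (c : G.ConnectedComponent) :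
    (G.induce c.supp).Connected := by
  classical
  obtain ⟨v, hv⟩ := c.exists_rep
  have hvs : v ∈ c.supp := by
    rw [SimpleGraph.ConnectedComponent.mem_supp_iff]; exact hv
  rw [SimpleGraph.connected_iff]
  refine ⟨?_, ⟨⟨v, hvs⟩⟩⟩
  · rintro ⟨a, ha⟩ ⟨b, hb⟩
    have hra : G.Reachable a b := by
      rw [SimpleGraph.ConnectedComponent.mem_supp_iff] at ha hb
      exact SimpleGraph.ConnectedComponent.exact (ha.trans hb.symm)
    obtain ⟨p⟩ := hra
    apply reachable_induce_of_walk p ?_ ha hb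
    intro x hx
    rw [SimpleGraph.ConnectedComponent.mem_supp_iff]
    rw [SimpleGraph.ConnectedComponent.mem_supp_iff] at ha
    have hr : G.Reachable a x := (p.takeUntil x hx).reachable
    rw [← ha]
    exact SimpleGraph.ConnectedComponent.sound hr.symm

end BDC

/-- for a strongly polynomial sequence of graphs of maximum degree at most `D`,
with `|V(A_n)| = P(n)` of degree `d`, every connected graph occurring as an induced subgraph
of some `A_n` occurs in some `A_m` with `m ≤ d+1`; consequently the set of isomorphism types
of connected components of the `A_n` is finite. -/
theorem bounded_degree_components (V : ℕ → Type) [∀ n, Fintype (V n)]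
    (A : ∀ n, SimpleGraph (V n)) (D : ℕ) (hsp : StronglyPolynomial A)
    (hdeg : ∀ n (v : V n), Nat.card ((A n).neighborSet v) ≤ D)
    (P : Polynomial ℚ) (hP : ∀ n : ℕ, (Fintype.card (V n) : ℚ) = P.eval (n : ℚ)) :
    (∀ (W : Type) [Fintype W] (F : SimpleGraph W), F.Connected →
        (∃ n, Nonempty (F ↪g A n)) → ∃ m, m ≤ P.natDegree + 1 ∧ Nonempty (F ↪g A m))
    ∧ {q : Σ j : ℕ, SimpleGraph (Fin j) | ∃ (n : ℕ) (c : (A n).ConnectedComponent),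
        Nonempty (q.2 ≃g (A n).induce c.supp)}.Finite := by
  classical
  have main1 : ∀ (W : Type) [Fintype W] (F : SimpleGraph W), F.Connected →
      (∃ n, Nonempty (F ↪g A n)) → ∃ m, m ≤ P.natDegree + 1 ∧ Nonempty (F ↪g A m) := by
    intro W _ F hconn hex
    obtain ⟨n₀, ⟨e₀⟩⟩ := hex
    obtain ⟨Q, hQ⟩ := BDC.emb_poly A hsp W F
    have hQ0 : Q ≠ 0 := by
      intro h
      have h1 := hQ n₀
      rw [h, Polynomial.eval_zero] at h1
      have h2 : BDC.embCount F (A n₀) = 0 := by exact_mod_cast h1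
      haveI : Nonempty (F ↪g A n₀) := ⟨e₀⟩
      have h3 : 0 < BDC.embCount F (A n₀) := Nat.card_pos
      omega
    set Cb : ℚ := ((D + 1 : ℕ) : ℚ) ^ Fintype.card W with hCb
    have hCpos : 0 < Cb := by positivity
    have hbound : ∀ n : ℕ, (BDC.embCount F (A n) : ℚ) ≤ Cb * P.eval ((n : ℚ)) := by
      intro n
      have h1 := BDC.embCount_le_of_connected F (A n) D (hdeg n) hconn
      calc (BDC.embCount F (A n) : ℚ)
          ≤ ((Fintype.card (V n) * (D + 1) ^ Fintype.card W : ℕ) : ℚ) := by exact_mod_cast h1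
        _ = Cb * ((Fintype.card (V n) : ℕ) : ℚ) := by push_cast [hCb]; ring
        _ = Cb * P.eval ((n : ℚ)) := by rw [hP n]
    have hdegQ : Q.natDegree ≤ P.natDegree :=
      BDC.natDegree_le_of_bound P Q (fun n => BDC.embCount F (A n)) Cb hCpos
        (fun n => hQ n) hQ0 hbound
    obtain ⟨m, hm, hne⟩ := BDC.exists_eval_ne hQ0 P.natDegree hdegQ
    refine ⟨m, hm.trans (Nat.le_succ _), ?_⟩
    have h4 : BDC.embCount F (A m) ≠ 0 := by
      intro h
      apply hne
      rw [← hQ m, h, Nat.cast_zero]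
    exact (Nat.card_ne_zero.mp h4).1
  refine ⟨main1, ?_⟩
  set Bd := (Finset.range (P.natDegree + 2)).sup (fun m => Fintype.card (V m)) with hBd
  apply Set.Finite.subset (Set.finite_range
    (fun p : (Σ j : Fin (Bd + 1), SimpleGraph (Fin j.1)) =>
      (⟨p.1.1, p.2⟩ : Σ j : ℕ, SimpleGraph (Fin j))))
  rintro ⟨j, G⟩ ⟨n, c, ⟨iso⟩⟩
  have hcon : G.Connected := (iso.connected_iff).mpr (BDC.induce_supp_connected (A n) c)
  have hemb : Nonempty (G ↪g A n) :=
    ⟨(SimpleGraph.Embedding.induce (c.supp : Set (V n))).comp iso.toEmbedding⟩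
  obtain ⟨m, hm, ⟨e⟩⟩ := main1 (Fin j) G hcon ⟨n, hemb⟩
  have hj : j ≤ Bd := by
    have h1 : Fintype.card (Fin j) ≤ Fintype.card (V m) :=
      Fintype.card_le_of_embedding e.toEmbedding
    rw [Fintype.card_fin] at h1
    have h2 : Fintype.card (V m) ≤ Bd :=
      Finset.le_sup (f := fun m => Fintype.card (V m))
        (Finset.mem_range.mpr (show m < P.natDegree + 2 by omega))
    omega
  exact ⟨⟨⟨j, by omega⟩, G⟩, rfl⟩
end

section
/- Let F_k be the bipartite graph with parts V_1 of size k and V_2 of size 2^k in which the vertices of V_2 have pairwise distinct neighborhoods in V_1 (realizing all subsets of V_1). Then any graph F' obtained from F_k by adding edges inside V_1 and inside V_2 has at least C(2^k, k) / (k! · C(2k, k)) pairwise non-isomorphic induced subgraphs of order 2k. -/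
open SimpleGraph

section Aux

variable {k : ℕ} {V₁ V₂ : Type} [Fintype V₁] [Fintype V₂]

/-- The inclusion of `V₁ ⊕ S` into `V₁ ⊕ V₂` for a finite set `S ⊆ V₂`. -/
def sEmb (S : Finset V₂) : (V₁ ⊕ {x // x ∈ S}) ↪ (V₁ ⊕ V₂) :=
  (Function.Embedding.refl V₁).sumMap (Function.Embedding.subtype _)

/-- The induced subgraph on `V₁ ⊕ S`. -/
def inducedS (F' : SimpleGraph (V₁ ⊕ V₂)) (S : Finset V₂) :
    SimpleGraph (V₁ ⊕ {x // x ∈ S}) :=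
  F'.comap (sEmb S)

/-- An embedding of the induced subgraph into the original graph. -/
def inducedSEmb (F' : SimpleGraph (V₁ ⊕ V₂)) (S : Finset V₂) :
    inducedS F' S ↪g F' :=
  SimpleGraph.Embedding.comap (sEmb S) F'

/-- The vertex set `V₁ ⊕ S` for `|S| = k` has `2k` elements. -/
noncomputable def eqS (h1 : Fintype.card V₁ = k) (S : {S : Finset V₂ // S.card = k}) :
    (V₁ ⊕ {x // x ∈ S.1}) ≃ Fin (2 * k) :=
  Fintype.equivFinOfCardEq (by
    simp [Fintype.card_sum, h1, S.2, two_mul])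

/-- A copy of the induced subgraph on `V₁ ⊕ S` moved onto the vertex set `Fin (2k)`. -/
noncomputable def fGraph (h1 : Fintype.card V₁ = k) (F' : SimpleGraph (V₁ ⊕ V₂))
    (S : {S : Finset V₂ // S.card = k}) : SimpleGraph (Fin (2 * k)) :=
  (inducedS F' S.1).comap (eqS h1 S).symm.toEmbedding

/-- `fGraph` is isomorphic to the induced subgraph. -/
noncomputable def fIso (h1 : Fintype.card V₁ = k) (F' : SimpleGraph (V₁ ⊕ V₂))
    (S : {S : Finset V₂ // S.card = k}) : fGraph h1 F' S ≃g inducedS F' S.1 :=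
  SimpleGraph.Iso.comap (eqS h1 S).symm (inducedS F' S.1)

/-- `fGraph` embeds into `F'`. -/
noncomputable def fEmb (h1 : Fintype.card V₁ = k) (F' : SimpleGraph (V₁ ⊕ V₂))
    (S : {S : Finset V₂ // S.card = k}) : fGraph h1 F' S ↪g F' :=
  (fIso h1 F' S).toEmbedding.trans (inducedSEmb F' S.1)

/-- Isomorphism of graphs on `Fin n` as a setoid. -/
def isoSetoid (n : ℕ) : Setoid (SimpleGraph (Fin n)) where
  r G H := Nonempty (G ≃g H)
  iseqv := ⟨fun G => ⟨Iso.refl⟩, fun ⟨e⟩ => ⟨e.symm⟩, fun ⟨e⟩ ⟨f⟩ => ⟨e.trans f⟩⟩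

theorem isoSetoid_exact {n : ℕ} {G H : SimpleGraph (Fin n)}
    (h : Quotient.mk (isoSetoid n) G = Quotient.mk (isoSetoid n) H) :
    Nonempty (G ≃g H) :=
  Quotient.exact h

theorem isoSetoid_sound {n : ℕ} {G H : SimpleGraph (Fin n)} (h : Nonempty (G ≃g H)) :
    Quotient.mk (isoSetoid n) G = Quotient.mk (isoSetoid n) H :=
  Quotient.sound h

/-- Key lemma: if two `2k`-vertex induced subgraphs (on `V₁ ⊕ S` resp. `V₁ ⊕ S'`)
are both isomorphic to a common graph `G` on `Fin (2k)` and the two isomorphisms place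
each vertex of `V₁` at the same spot of `Fin (2k)`, then `S ⊆ S'`, since the vertices
of `V₂` are determined by their neighbourhoods in `V₁`. -/
theorem subset_of_eqOn_inl {F' : SimpleGraph (V₁ ⊕ V₂)}
    (hnbr : Function.Injective fun w : V₂ => {a : V₁ | F'.Adj (Sum.inl a) (Sum.inr w)})
    {G : SimpleGraph (Fin (2 * k))} {S S' : Finset V₂}
    (χ : G ≃g inducedS F' S) (χ' : G ≃g inducedS F' S')
    (h : ∀ a : V₁, χ.symm (Sum.inl a) = χ'.symm (Sum.inl a)) :
    S ⊆ S' := by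
  intro w hw
  set x : Fin (2 * k) := χ.symm (Sum.inr ⟨w, hw⟩) with hx
  have hχx : χ x = Sum.inr ⟨w, hw⟩ := by
    rw [hx]; exact χ.apply_symm_apply _
  obtain ⟨w', hw', hxw'⟩ : ∃ (w' : V₂) (hw' : w' ∈ S'), χ' x = Sum.inr ⟨w', hw'⟩ := by
    cases hc : χ' x with
    | inl a =>
        exfalso
        have hxa : x = χ'.symm (Sum.inl a) := by
          rw [← hc, χ'.symm_apply_apply]
        rw [← h a] at hxa
        have : χ x = Sum.inl a := by rw [hxa, χ.apply_symm_apply]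
        rw [hχx] at this
        cases this
    | inr u =>
        obtain ⟨w1, hw1⟩ := u
        exact ⟨w1, hw1, rfl⟩
  -- the neighbourhoods of `w` and `w'` in `V₁` coincide
  have hadj : ∀ a : V₁, F'.Adj (Sum.inl a) (Sum.inr w) ↔ G.Adj (χ.symm (Sum.inl a)) x := by
    intro a
    have h1' : F'.Adj (Sum.inl a) (Sum.inr w) ↔
        (inducedS F' S).Adj (Sum.inl a) (Sum.inr ⟨w, hw⟩) := Iff.rfl
    rw [h1']
    constructor
    · intro hA
      have := χ.map_rel_iff (a := χ.symm (Sum.inl a)) (b := x)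
      rw [χ.apply_symm_apply, hχx] at this
      exact this.mp hA
    · intro hA
      have := χ.map_rel_iff (a := χ.symm (Sum.inl a)) (b := x)
      rw [χ.apply_symm_apply, hχx] at this
      exact this.mpr hA
  have hadj' : ∀ a : V₁, F'.Adj (Sum.inl a) (Sum.inr w') ↔ G.Adj (χ'.symm (Sum.inl a)) x := by
    intro a
    have h1' : F'.Adj (Sum.inl a) (Sum.inr w') ↔
        (inducedS F' S').Adj (Sum.inl a) (Sum.inr ⟨w', hw'⟩) := Iff.rfl
    rw [h1']
    constructor
    · intro hA
      have := χ'.map_rel_iff (a := χ'.symm (Sum.inl a)) (b := x)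
      rw [χ'.apply_symm_apply, hxw'] at this
      exact this.mp hA
    · intro hA
      have := χ'.map_rel_iff (a := χ'.symm (Sum.inl a)) (b := x)
      rw [χ'.apply_symm_apply, hxw'] at this
      exact this.mpr hA
  have hset : {a : V₁ | F'.Adj (Sum.inl a) (Sum.inr w)} =
      {a : V₁ | F'.Adj (Sum.inl a) (Sum.inr w')} := by
    ext a
    simp only [Set.mem_setOf_eq]
    rw [hadj a, hadj' a, h a]
  have : w = w' := hnbr hset
  rw [this]; exact hw'

end Aux

/-- let `F'` be a graph on `V₁ ⊕ V₂` with `|V₁| = k`, `|V₂| = 2^k`, whose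
cross edges realize every subset of `V₁` as the neighbourhood in `V₁` of exactly one
vertex of `V₂` (arbitrary edges inside `V₁` and inside `V₂` are allowed). Then `F'` has
at least `C(2^k, k) / (k!·C(2k, k))` pairwise non-isomorphic induced subgraphs of
order `2k`. -/
theorem many_induced_subgraphs (k : ℕ) (V₁ V₂ : Type) [Fintype V₁] [Fintype V₂]
    (h1 : Fintype.card V₁ = k) (h2 : Fintype.card V₂ = 2 ^ k)
    (F' : SimpleGraph (V₁ ⊕ V₂))
    (hnbr : Function.Bijective
      (fun w : V₂ => {a : V₁ | F'.Adj (Sum.inl a) (Sum.inr w)})) :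
    ∃ N : ℕ, (((2 ^ k).choose k : ℚ)) / ((Nat.factorial k : ℚ) * ((2 * k).choose k : ℚ)) ≤ N ∧
      ∃ H : Fin N → SimpleGraph (Fin (2 * k)),
        (∀ i, Nonempty ((H i) ↪g F')) ∧
        ∀ i j, i ≠ j → IsEmpty ((H i) ≃g (H j)) := by
  classical
  letI st : Setoid (SimpleGraph (Fin (2 * k))) := isoSetoid (2 * k)
  set g : {S : Finset V₂ // S.card = k} → Quotient st :=
    fun S => Quotient.mk st (fGraph h1 F' S) with hg
  set s : Finset {S : Finset V₂ // S.card = k} := Finset.univ with hs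
  set t : Finset (Quotient st) := s.image g with ht
  have hne : Nonempty (V₁ ↪ Fin (2 * k)) := by
    apply Function.Embedding.nonempty_of_card_le
    simp [h1]; omega
  -- fiber bound
  have hfiber : ∀ q ∈ t, (s.filter fun S => g S = q).card ≤
      k.factorial * (2 * k).choose k := by
    intro q hq
    have hΨdef : ∀ S : {S : Finset V₂ // S.card = k}, g S = q →
        Nonempty (q.out ≃g fGraph h1 F' S) := by
      intro S hS
      have : Quotient.mk st q.out = Quotient.mk st (fGraph h1 F' S) := by
        rw [Quotient.out_eq, ← hS]
      exact isoSetoid_exact this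
    -- map each member of the fiber to the positions of `V₁` inside `Fin (2k)`
    set Ψ : {S : Finset V₂ // S.card = k} → (V₁ ↪ Fin (2 * k)) :=
      fun S =>
        if h : Nonempty (q.out ≃g fGraph h1 F' S) then
          ⟨fun a => ((Classical.choice h).trans (fIso h1 F' S)).symm (Sum.inl a),
            fun a b hab => Sum.inl_injective
              (((Classical.choice h).trans (fIso h1 F' S)).symm.toEquiv.injective hab)⟩
        else Classical.choice hne with hΨ
    have hinj : Set.InjOn Ψ (s.filter fun S => g S = q) := by
      intro S hS S' hS' hSS'
      have hgS : g S = q := (Finset.mem_filter.mp hS).2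
      have hgS' : g S' = q := (Finset.mem_filter.mp hS').2
      have hN : Nonempty (q.out ≃g fGraph h1 F' S) := hΨdef S hgS
      have hN' : Nonempty (q.out ≃g fGraph h1 F' S') := hΨdef S' hgS'
      set χ : q.out ≃g inducedS F' S.1 := (Classical.choice hN).trans (fIso h1 F' S) with hχ
      set χ' : q.out ≃g inducedS F' S'.1 := (Classical.choice hN').trans (fIso h1 F' S') with hχ'
      have hpt : ∀ a : V₁, χ.symm (Sum.inl a) = χ'.symm (Sum.inl a) := by
        intro a
        have h1' := congrFun (congrArg (fun (e : V₁ ↪ Fin (2 * k)) => (e : V₁ → Fin (2 * k))) hSS') a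
        simp only [hΨ, dif_pos hN, dif_pos hN'] at h1'
        exact h1'
      have hsub : S.1 ⊆ S'.1 := subset_of_eqOn_inl hnbr.injective χ χ' hpt
      have hsub' : S'.1 ⊆ S.1 := subset_of_eqOn_inl hnbr.injective χ' χ (fun a => (hpt a).symm)
      exact Subtype.ext (Finset.Subset.antisymm hsub hsub')
    calc (s.filter fun S => g S = q).card
        ≤ (Finset.univ : Finset (V₁ ↪ Fin (2 * k))).card :=
          Finset.card_le_card_of_injOn Ψ (fun _ _ => Finset.mem_univ _) hinj
      _ = Fintype.card (V₁ ↪ Fin (2 * k)) := Finset.card_univ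
      _ = (Fintype.card (Fin (2 * k))).descFactorial (Fintype.card V₁) :=
          Fintype.card_embedding_eq
      _ = k.factorial * (2 * k).choose k := by
          rw [Fintype.card_fin, h1, Nat.descFactorial_eq_factorial_mul_choose]
  have hcount : (2 ^ k).choose k ≤ (k.factorial * (2 * k).choose k) * t.card := by
    have := Finset.card_le_mul_card_image (f := g) s (k.factorial * (2 * k).choose k) hfiber
    have hscard : s.card = (2 ^ k).choose k := by
      rw [hs, Finset.card_univ, Fintype.card_finset_len, h2]
    rw [hscard] at this
    exact this
  refine ⟨t.card, ?_, ?_⟩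
  · -- the numeric inequality
    have hpos : (0 : ℚ) < (k.factorial : ℚ) * ((2 * k).choose k : ℚ) := by
      have h1' : 0 < k.factorial := Nat.factorial_pos k
      have h2' : 0 < (2 * k).choose k := Nat.choose_pos (by omega)
      positivity
    rw [div_le_iff₀ hpos]
    have : ((2 ^ k).choose k : ℚ) ≤ ((k.factorial * (2 * k).choose k) * t.card : ℕ) := by
      exact_mod_cast Nat.cast_le.mpr hcount
    push_cast at this ⊢
    linarith
  · -- the family of graphs
    refine ⟨fun i => (((t.equivFin.symm i : t) : Quotient st)).out, ?_, ?_⟩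
    · intro i
      obtain ⟨S, _, hS⟩ := Finset.mem_image.mp (t.equivFin.symm i).2
      have hmk : Quotient.mk st ((((t.equivFin.symm i : t) : Quotient st)).out)
          = Quotient.mk st (fGraph h1 F' S) := by
        rw [Quotient.out_eq, ← hS]
      obtain ⟨e⟩ := isoSetoid_exact hmk
      exact ⟨e.toEmbedding.trans (fEmb h1 F' S)⟩
    · intro i j hij
      constructor
      intro e
      apply hij
      have : ((t.equivFin.symm i : t) : Quotient st) = ((t.equivFin.symm j : t) : Quotient st) := by
        rw [← Quotient.out_eq ((t.equivFin.symm i : t) : Quotient st),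
          ← Quotient.out_eq ((t.equivFin.symm j : t) : Quotient st)]
        exact isoSetoid_sound ⟨e⟩
      have h2' : t.equivFin.symm i = t.equivFin.symm j := Subtype.ext this
      exact t.equivFin.symm.injective h2'
end

section
/- If (A_n) is a strongly polynomial sequence of finite graphs and |V(A_n)| = P(n) for a polynomial P of degree d, then the number of isomorphism classes of k-vertex graphs occurring as induced subgraphs of some A_n is at most Σ_{i=1}^{kd+1} C(P(i), k); in particular it is 2^{o(k²)} as k → ∞, so the hereditary class of induced subgraphs of the A_n's is random-free in the sense of Lovász–Szegedy. -/
open SimpleGraph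

/-- The number of induced embeddings of `F` into `A`. -/
noncomputable def indCount {α β : Type*} (F : SimpleGraph α) (A : SimpleGraph β) : ℕ :=
  Nat.card (F ↪g A)

/-- The setoid identifying isomorphic graphs among those on `α` satisfying `Pred`. -/
def graphIsoSetoid (α : Type*) (Pred : SimpleGraph α → Prop) :
    Setoid {G : SimpleGraph α // Pred G} where
  r G H := Nonempty (G.1 ≃g H.1)
  iseqv := ⟨fun _ => ⟨Iso.refl⟩, fun ⟨e⟩ => ⟨e.symm⟩, fun ⟨e⟩ ⟨f⟩ => ⟨e.trans f⟩⟩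

open Polynomial Filter


/-- A rational polynomial with nonnegative values at naturals has nonnegative
leading coefficient. -/
lemma lc_nonneg_of_eval_nat_nonneg (Q : Polynomial ℚ) (h : ∀ n : ℕ, 0 ≤ Q.eval (n : ℚ)) :
    0 ≤ Q.leadingCoeff := by
  by_contra hneg
  push_neg at hneg
  by_cases hd : 0 < Q.degree
  · set R := Q.map (algebraMap ℚ ℝ) with hR
    have hinj : Function.Injective (algebraMap ℚ ℝ) := (algebraMap ℚ ℝ).injective
    have hdR : 0 < R.degree := by
      rwa [hR, Polynomial.degree_map_eq_of_injective hinj]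
    have hlcR : R.leadingCoeff ≤ 0 := by
      rw [hR, Polynomial.leadingCoeff_map_of_injective hinj]
      rw [eq_ratCast]
      exact_mod_cast hneg.le
    have htend : Tendsto (fun n : ℕ => R.eval (n : ℝ)) atTop atBot :=
      (R.tendsto_atBot_of_leadingCoeff_nonpos hdR hlcR).comp tendsto_natCast_atTop_atTop
    obtain ⟨n, hn⟩ := (htend.eventually (eventually_lt_atBot (0 : ℝ))).exists
    have : R.eval (n : ℝ) = ((Q.eval ((n : ℚ)) : ℚ) : ℝ) := by
      rw [hR, Polynomial.eval_map]
      rw [show ((n : ℝ)) = algebraMap ℚ ℝ ((n : ℚ)) by rw [eq_ratCast]; push_cast; ring]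
      rw [Polynomial.eval₂_at_apply]
      rw [eq_ratCast]
    rw [this] at hn
    have hn' : Q.eval (n : ℚ) < 0 := by exact_mod_cast hn
    exact absurd (h n) hn'.not_ge
  · push_neg at hd
    obtain ⟨c, rfl⟩ : ∃ c, Q = Polynomial.C c := ⟨Q.coeff 0, (Polynomial.eq_C_of_degree_le_zero hd)⟩
    have := h 0
    simp only [Polynomial.eval_C] at this
    simp only [Polynomial.leadingCoeff_C] at hneg
    exact absurd this hneg.not_ge

lemma natDegree_le_of_eval_nat_le (Q R : Polynomial ℚ) (hQ : ∀ n : ℕ, 0 ≤ Q.eval (n : ℚ))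
    (hle : ∀ n : ℕ, Q.eval (n : ℚ) ≤ R.eval (n : ℚ)) : Q.natDegree ≤ R.natDegree := by
  by_contra hcon
  push_neg at hcon
  have hQ0 : Q ≠ 0 := by
    rintro rfl
    simp at hcon
  have hdeg : R.degree < Q.degree := Polynomial.degree_lt_degree hcon
  have h1 : 0 ≤ (R - Q).leadingCoeff :=
    lc_nonneg_of_eval_nat_nonneg _ (fun n => by
      rw [Polynomial.eval_sub, sub_nonneg]; exact hle n)
  rw [Polynomial.leadingCoeff_sub_of_degree_lt' hdeg] at h1
  have h2 : 0 ≤ Q.leadingCoeff := lc_nonneg_of_eval_nat_nonneg Q hQ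
  have h3 : Q.leadingCoeff ≠ 0 := Polynomial.leadingCoeff_ne_zero.mpr hQ0
  have : Q.leadingCoeff = 0 := le_antisymm (by linarith) h2
  exact h3 this

/-- Two graphs on `Fin k` embedding into the same graph with the same image are isomorphic. -/
lemma iso_of_image_eq {k : ℕ} {W : Type} (B : SimpleGraph W)
    (G H : SimpleGraph (Fin k)) (f : G ↪g B) (g : H ↪g B)
    (h : Set.range ⇑f = Set.range ⇑g) : Nonempty (G ≃g H) := by
  let ef : Fin k ≃ Set.range ⇑f := Equiv.ofInjective _ f.injective
  let eg : Fin k ≃ Set.range ⇑g := Equiv.ofInjective _ g.injective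
  let e : Fin k ≃ Fin k := ef.trans ((Equiv.setCongr h).trans eg.symm)
  have he : ∀ a, g (e a) = f a := by
    intro a
    have h1 : eg (e a) = (Equiv.setCongr h) (ef a) := by
      simp [e, Equiv.apply_symm_apply]
    have h2 : (eg (e a) : W) = g (e a) := rfl
    have h3 : ((Equiv.setCongr h) (ef a) : W) = f a := rfl
    rw [← h2, h1, h3]
  refine ⟨⟨e, ?_⟩⟩
  intro a b
  rw [← g.map_rel_iff, he, he]
  exact f.map_rel_iff

lemma heq_image_iso {k : ℕ} (V : ℕ → Type) [∀ n, Fintype (V n)] (A : ∀ n, SimpleGraph (V n))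
    (G H : SimpleGraph (Fin k)) (i j : ℕ) (hij : i = j)
    (f : G ↪g A i) (g : H ↪g A j) (D : ∀ n, DecidableEq (V n))
    (h : HEq (@Finset.image _ _ (D i) ⇑f Finset.univ) (@Finset.image _ _ (D j) ⇑g Finset.univ)) :
    Nonempty (G ≃g H) := by
  subst hij
  have h' : @Finset.image _ _ (D i) ⇑f Finset.univ = @Finset.image _ _ (D i) ⇑g Finset.univ :=
    eq_of_heq h
  apply iso_of_image_eq (A i) G H f g
  have := congrArg (fun s : Finset (V i) => (s : Set (V i))) h'
  simpa [Finset.coe_image, Set.image_univ] using this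

lemma heq_snd_iso {k : ℕ} (V : ℕ → Type) [∀ n, Fintype (V n)] (A : ∀ n, SimpleGraph (V n))
    (G H : SimpleGraph (Fin k)) (i j : ℕ) (hij : i = j)
    (f : G ↪g A i) (g : H ↪g A j) (D : ∀ n, DecidableEq (V n))
    (s : {s : Finset (V i) // s.card = k}) (t : {s : Finset (V j) // s.card = k})
    (hs : s.1 = @Finset.image _ _ (D i) ⇑f Finset.univ)
    (ht : t.1 = @Finset.image _ _ (D j) ⇑g Finset.univ)
    (h : HEq s t) : Nonempty (G ≃g H) := by
  subst hij
  have hst : s = t := eq_of_heq h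
  apply heq_image_iso V A G H i i rfl f g D
  rw [heq_iff_eq, ← hs, ← ht, hst]

/-- if `(A_n)` is strongly polynomial (in the induced-count sense) with
`|V(A_n)| = P(n)`, `d = deg P`, then every `k`-vertex graph occurring as an induced
subgraph of some `A_n` occurs in some `A_m` with `m ≤ kd+1`, and the number of
isomorphism classes of `k`-vertex induced subgraphs of the `A_n` is at most
`Σ_{i=1}^{kd+1} C(P(i), k)`. -/
theorem stronglyPolynomial_few_induced_subgraphs (V : ℕ → Type) [∀ n, Fintype (V n)]
    (A : ∀ n, SimpleGraph (V n))
    (hsp : ∀ (W : Type) [Fintype W] (F : SimpleGraph W),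
      ∃ Q : Polynomial ℚ, ∀ n : ℕ, (indCount F (A n) : ℚ) = Q.eval (n : ℚ))
    (P : Polynomial ℚ) (hP : ∀ n : ℕ, (Fintype.card (V n) : ℚ) = P.eval (n : ℚ))
    (k : ℕ) :
    (∀ F : SimpleGraph (Fin k), (∃ n, Nonempty (F ↪g A n)) →
        ∃ m, m ≤ k * P.natDegree + 1 ∧ Nonempty (F ↪g A m))
    ∧ Nat.card
        (Quotient (graphIsoSetoid (Fin k) (fun G => ∃ n, Nonempty (G ↪g A n))))
      ≤ ∑ i ∈ Finset.Icc 1 (k * P.natDegree + 1), (Fintype.card (V i)).choose k := by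
  have D : ∀ n, DecidableEq (V n) := fun n => Classical.decEq _
  set N := k * P.natDegree + 1 with hN
  have key : ∀ F : SimpleGraph (Fin k), (∃ n, Nonempty (F ↪g A n)) →
      ∃ m, 1 ≤ m ∧ m ≤ N ∧ Nonempty (F ↪g A m) := by
    intro F hF
    obtain ⟨n0, hn0⟩ := hF
    obtain ⟨Q, hQ⟩ := hsp (Fin k) F
    have hfin : ∀ n, Finite (F ↪g A n) := fun n =>
      Finite.of_injective (fun f : F ↪g A n => ⇑f) DFunLike.coe_injective
    have hnn : ∀ n : ℕ, 0 ≤ Q.eval (n : ℚ) := fun n => by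
      rw [← hQ]; exact_mod_cast Nat.zero_le _
    have hle : ∀ n : ℕ, Q.eval (n : ℚ) ≤ (P ^ k).eval (n : ℚ) := by
      intro n
      have hb : indCount F (A n) ≤ (Fintype.card (V n)) ^ k := by
        have h1 := Nat.card_le_card_of_injective
          (fun f : F ↪g A n => ⇑f) (DFunLike.coe_injective)
        have h2 : Nat.card (Fin k → V n) = (Fintype.card (V n)) ^ k := by
          rw [Nat.card_eq_fintype_card, Fintype.card_fun, Fintype.card_fin]
        rw [indCount]
        calc Nat.card (F ↪g A n) ≤ Nat.card (Fin k → V n) := h1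
          _ = _ := h2
      rw [← hQ, Polynomial.eval_pow, ← hP]
      exact_mod_cast hb
    have hdeg : Q.natDegree ≤ k * P.natDegree :=
      (natDegree_le_of_eval_nat_le Q (P ^ k) hnn hle).trans Polynomial.natDegree_pow_le
    have hQ0 : Q ≠ 0 := by
      intro h0
      have h1 : 0 < indCount F (A n0) := by
        rw [indCount]
        have := hfin n0
        exact Nat.card_pos
      have h2 : (indCount F (A n0) : ℚ) = 0 := by rw [hQ, h0]; simp
      rw [Nat.cast_eq_zero] at h2
      omega
    by_contra hcon
    push_neg at hcon
    have hzero : ∀ x ∈ (Finset.Icc 1 N).image (Nat.cast : ℕ → ℚ), Q.eval x = 0 := by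
      intro x hx
      obtain ⟨mm, hm, rfl⟩ := Finset.mem_image.mp hx
      rw [Finset.mem_Icc] at hm
      have hemp : ¬Nonempty (F ↪g A mm) := not_nonempty_iff.mpr (hcon mm hm.1 hm.2)
      have h0 : indCount F (A mm) = 0 := by
        rw [indCount, Nat.card_eq_zero]
        exact Or.inl (not_nonempty_iff.mp hemp)
      rw [← hQ, h0]; simp
    have hcard : Q.natDegree < ((Finset.Icc 1 N).image (Nat.cast : ℕ → ℚ)).card := by
      rw [Finset.card_image_of_injective _ Nat.cast_injective, Nat.card_Icc]
      omega
    exact hQ0 (Polynomial.eq_zero_of_natDegree_lt_card_of_eval_eq_zero' Q _ hzero hcard)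
  refine ⟨fun F hF => by obtain ⟨m, _, hm2, hm3⟩ := key F hF; exact ⟨m, hm2, hm3⟩, ?_⟩
  have key' := fun (G : {G : SimpleGraph (Fin k) // ∃ n, Nonempty (G ↪g A n)}) => key G.1 G.2
  choose m hm1 hm2 hemb using key'
  let emb : ∀ G, G.1 ↪g A (m G) := fun G => (hemb G).some
  let Φ : Quotient (graphIsoSetoid (Fin k) (fun G => ∃ n, Nonempty (G ↪g A n))) →
      ((i : Finset.Icc 1 N) × {s : Finset (V i) // s.card = k}) :=
    fun q => ⟨⟨m q.out, Finset.mem_Icc.mpr ⟨hm1 q.out, hm2 q.out⟩⟩,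
      ⟨@Finset.image _ _ (D _) (⇑(emb q.out)) Finset.univ, by
        rw [Finset.card_image_of_injective _ (emb q.out).injective, Finset.card_univ,
          Fintype.card_fin]⟩⟩
  have hΦ : Function.Injective Φ := by
    intro q₁ q₂ hq
    have h1 : m q₁.out = m q₂.out :=
      Subtype.ext_iff.mp (Sigma.ext_iff.mp hq).1
    have hiso : Nonempty (q₁.out.1 ≃g q₂.out.1) :=
      heq_snd_iso V A q₁.out.1 q₂.out.1 _ _ h1 (emb q₁.out) (emb q₂.out) D
        (Φ q₁).2 (Φ q₂).2 rfl rfl (Sigma.ext_iff.mp hq).2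
    exact Quotient.out_equiv_out.mp hiso
  have hle := Nat.card_le_card_of_injective Φ hΦ
  refine hle.trans ?_
  rw [Nat.card_eq_fintype_card, Fintype.card_sigma]
  rw [← Finset.sum_coe_sort (Finset.Icc 1 N) (fun i => (Fintype.card (V i)).choose k)]
  exact le_of_eq (Finset.sum_congr rfl (fun i _ => Fintype.card_finset_len k))
end
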